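/- Let Λ, t_s, t_p be natural numbers with t_s + 1 ≤ Λ, and let L_1 ≥ L_2 ≥ ⋯ ≥ L_Λ ≥ 0 be a non-increasing sequence of natural numbers with t_p + 1 ≤ L_1. Then the number of pairs (T, S) with T ⊆ {1,…,Λ}, |T| = t_s + 1, S ⊆ {1,…,L_1}, |S| = t_p + 1, for which there exist λ ∈ T and j ∈ S with j ≤ L_λ, equals ∑_{n=1}^{Λ} C(Λ − n, t_s) · [ C(L_1, t_p+1) − C(L_1 − L_n, t_p+1) ]. -/

import Mathlib

open Finset

/-- the number of pairs `(T, S)` with `T ⊆ {1,…,Λ}`, `|T| = ts + 1`,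
`S ⊆ {1,…,L 1}`, `|S| = tp + 1`, for which there exist `l ∈ T` and `j ∈ S` with
`j ≤ L l`, equals `∑_{n=1}^{Λ} C(Λ − n, ts) · [C(L 1, tp+1) − C(L 1 − L n, tp+1)]`. -/
theorem stmt7 (Λ ts tp : ℕ) (hts : ts + 1 ≤ Λ) (L : ℕ → ℕ)
    (hmono : ∀ i j, 1 ≤ i → i ≤ j → j ≤ Λ → L j ≤ L i)
    (htp : tp + 1 ≤ L 1) :
    ((((Finset.Icc 1 Λ).powersetCard (ts + 1)) ×ˢ
        ((Finset.Icc 1 (L 1)).powersetCard (tp + 1))).filter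
      (fun TS : Finset ℕ × Finset ℕ => ∃ l ∈ TS.1, ∃ j ∈ TS.2, j ≤ L l)).card
    = ∑ n ∈ Finset.Icc 1 Λ,
        Nat.choose (Λ - n) ts *
          (Nat.choose (L 1) (tp + 1) - Nat.choose (L 1 - L n) (tp + 1)) := by
  classical
  set A := (Finset.Icc 1 Λ).powersetCard (ts + 1) with hA
  set B := (Finset.Icc 1 (L 1)).powersetCard (tp + 1) with hB
  set f : Finset ℕ × Finset ℕ → ℕ := fun TS => WithTop.untopD 0 TS.1.min with hf
  have hTne : ∀ T ∈ A, T.Nonempty := by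
    intro T hT
    rw [hA, Finset.mem_powersetCard] at hT
    exact Finset.card_pos.mp (by omega)
  have hfval : ∀ (T : Finset ℕ) (h : T.Nonempty), WithTop.untopD 0 T.min = T.min' h := by
    intro T h
    rw [← Finset.coe_min' h, WithTop.untopD_coe]
  -- fiberwise
  rw [Finset.card_eq_sum_card_fiberwise (f := f) (t := Finset.Icc 1 Λ) ?_]
  · apply Finset.sum_congr rfl
    intro n hn
    rw [Finset.mem_Icc] at hn
    rw [Finset.filter_filter]
    have hcongr : ∀ TS ∈ A ×ˢ B,
        ((∃ l ∈ TS.1, ∃ j ∈ TS.2, j ≤ L l) ∧ f TS = n) ↔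
        ((WithTop.untopD 0 TS.1.min = n) ∧ ∃ j ∈ TS.2, j ≤ L n) := by
      rintro ⟨T, S⟩ hTS
      rw [Finset.mem_product] at hTS
      have hne := hTne T hTS.1
      have hTsub : T ⊆ Finset.Icc 1 Λ := (Finset.mem_powersetCard.mp hTS.1).1
      simp only [hf, hfval T hne]
      constructor
      · rintro ⟨⟨l, hl, j, hj, hjl⟩, hmin⟩
        refine ⟨hmin, j, hj, hjl.trans ?_⟩
        have h1 := Finset.mem_Icc.mp (hTsub hl)
        have h2 : n ≤ l := hmin ▸ Finset.min'_le T l hl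
        have h3 : 1 ≤ n := hmin ▸ (Finset.mem_Icc.mp (hTsub (Finset.min'_mem T hne))).1
        exact hmono n l h3 h2 h1.2
      · rintro ⟨hmin, j, hj, hjn⟩
        exact ⟨⟨T.min' hne, Finset.min'_mem T hne, j, hj, hmin ▸ hjn⟩, hmin⟩
    rw [Finset.filter_congr hcongr,
      Finset.filter_product (fun T : Finset ℕ => WithTop.untopD 0 T.min = n)
        (fun S : Finset ℕ => ∃ j ∈ S, j ≤ L n), Finset.card_product]
    congr 1
    -- T-side count
    · have : (A.filter fun T => WithTop.untopD 0 T.min = n).card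
          = ((Finset.Icc (n+1) Λ).powersetCard ts).card := by
        apply Finset.card_nbij' (fun T => T.erase n) (fun T' => insert n T')
        · intro T hT
          rw [Finset.mem_coe, Finset.mem_filter] at hT
          obtain ⟨hTA, hmin⟩ := hT
          have hne := hTne T hTA
          rw [hfval T hne] at hmin
          have hnT : n ∈ T := hmin ▸ Finset.min'_mem T hne
          obtain ⟨hTsub, hTcard⟩ := Finset.mem_powersetCard.mp hTA
          rw [Finset.mem_coe, Finset.mem_powersetCard]
          constructor
          · intro x hx
            rw [Finset.mem_erase] at hx
            have h1 := Finset.mem_Icc.mp (hTsub hx.2)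
            have h2 : n ≤ x := hmin ▸ Finset.min'_le T x hx.2
            rw [Finset.mem_Icc]
            omega
          · rw [Finset.card_erase_of_mem hnT, hTcard]; omega
        · intro T' hT'
          obtain ⟨hsub, hcard⟩ := Finset.mem_powersetCard.mp hT'
          have hnT' : n ∉ T' := fun h => by
            have := Finset.mem_Icc.mp (hsub h); omega
          have hle : ∀ x ∈ T', n + 1 ≤ x := fun x hx =>
            (Finset.mem_Icc.mp (hsub hx)).1
          rw [Finset.mem_coe, Finset.mem_filter]
          have hne : (insert n T').Nonempty := Finset.insert_nonempty _ _
          constructor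
          · rw [Finset.mem_powersetCard]
            constructor
            · intro x hx
              rw [Finset.mem_insert] at hx
              rcases hx with rfl | hx
              · rw [Finset.mem_Icc]; omega
              · have := Finset.mem_Icc.mp (hsub hx)
                rw [Finset.mem_Icc]; omega
            · rw [Finset.card_insert_of_notMem hnT', hcard]
          · rw [hfval _ hne]
            have : (insert n T').min' hne = n := by
              apply le_antisymm
              · exact Finset.min'_le _ _ (Finset.mem_insert_self n T')
              · apply Finset.le_min'
                intro y hy
                rw [Finset.mem_insert] at hy
                rcases hy with rfl | hy
                · exact le_rfl
                · exact le_of_lt (hle y hy)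
            exact this
        · intro T hT
          rw [Finset.mem_coe, Finset.mem_filter] at hT
          have hne := hTne T hT.1
          have hmin := hT.2
          rw [hfval T hne] at hmin
          exact Finset.insert_erase (hmin ▸ Finset.min'_mem T hne)
        · intro T' hT'
          obtain ⟨hsub, hcard⟩ := Finset.mem_powersetCard.mp hT'
          have hnT' : n ∉ T' := fun h => by
            have := Finset.mem_Icc.mp (hsub h); omega
          exact Finset.erase_insert hnT'
      rw [this, Finset.card_powersetCard, Nat.card_Icc]
      congr 1
      omega
    -- S-side count
    · have hcompl : B.filter (fun S => ¬ ∃ j ∈ S, j ≤ L n)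
          = (Finset.Icc (L n + 1) (L 1)).powersetCard (tp + 1) := by
        ext S
        simp only [Finset.mem_filter, Finset.mem_powersetCard, hB, not_exists, not_and]
        constructor
        · rintro ⟨⟨hsub, hcard⟩, hall⟩
          refine ⟨fun x hx => ?_, hcard⟩
          have h1 := Finset.mem_Icc.mp (hsub hx)
          have h2 := hall x hx
          rw [Finset.mem_Icc]
          omega
        · rintro ⟨hsub, hcard⟩
          refine ⟨⟨fun x hx => ?_, hcard⟩, fun x hx h => ?_⟩
          · have := Finset.mem_Icc.mp (hsub hx)
            rw [Finset.mem_Icc]; omega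
          · have := Finset.mem_Icc.mp (hsub hx); omega
      have htotal := Finset.card_filter_add_card_filter_not
        (s := B) (p := fun S => ∃ j ∈ S, j ≤ L n)
      have hBcard : B.card = Nat.choose (L 1) (tp + 1) := by
        rw [hB, Finset.card_powersetCard, Nat.card_Icc]
        congr 1
      have hNcard : (B.filter (fun S => ¬ ∃ j ∈ S, j ≤ L n)).card
          = Nat.choose (L 1 - L n) (tp + 1) := by
        rw [hcompl, Finset.card_powersetCard, Nat.card_Icc]
        congr 1; omega
      omega
  · intro TS hTS
    rw [Finset.mem_coe, Finset.mem_filter] at hTS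
    obtain ⟨hTS, l, hl, j, hj, hjl⟩ := hTS
    rw [Finset.mem_product] at hTS
    have hne := hTne TS.1 hTS.1
    have hsub := (Finset.mem_powersetCard.mp hTS.1).1
    rw [Finset.mem_coe]
    show WithTop.untopD 0 TS.1.min ∈ Finset.Icc 1 Λ
    rw [hfval TS.1 hne]
    exact hsub (Finset.min'_mem TS.1 hne)
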